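/- The function K ↦ K·erfc(√(log(7K))) is monotonically decreasing for K ≥ 1 (K a positive integer or real ≥ 1), and hence for all integers K ≥ 1, K·erfc(√(log 7K)) ≤ erfc(√(log 7)). -/

import Mathlib

open Real MeasureTheory Set Filter

/-- The error function `erf(x) = (2/√π)∫₀ˣ e^{-t²} dt`. -/
noncomputable def erf (x : ℝ) : ℝ :=
  (2 / Real.sqrt Real.pi) * ∫ t in (0:ℝ)..x, Real.exp (-t^2)

/-- The complementary error function `erfc(x) = 1 - erf(x)`. -/
noncomputable def erfc (x : ℝ) : ℝ := 1 - erf x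

lemma hasDerivAt_erf (x : ℝ) :
    HasDerivAt erf (2 / Real.sqrt Real.pi * Real.exp (-x^2)) x := by
  have hc : Continuous fun t : ℝ => Real.exp (-t^2) := by continuity
  exact ((hc.integral_hasStrictDerivAt 0 x).hasDerivAt).const_mul (2 / Real.sqrt Real.pi)

lemma integrableOn_gauss (u : ℝ) : IntegrableOn (fun t : ℝ => Real.exp (-t^2)) (Set.Ioi u) := by
  have := (integrable_exp_neg_mul_sq (b := 1) one_pos)
  simpa using this.integrableOn

lemma integrableOn_mul_gauss (u : ℝ) :
    IntegrableOn (fun t : ℝ => t * Real.exp (-t^2)) (Set.Ioi u) := by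
  have := (integrable_mul_exp_neg_mul_sq (b := 1) one_pos)
  simpa using this.integrableOn

lemma erfc_eq_integral {u : ℝ} (hu : 0 ≤ u) :
    erfc u = (2 / Real.sqrt Real.pi) * ∫ t in Set.Ioi u, Real.exp (-t^2) := by
  have hIoi0 : ∫ t in Set.Ioi (0:ℝ), Real.exp (-t^2) = Real.sqrt Real.pi / 2 := by
    have := integral_gaussian_Ioi 1
    simpa using this
  have hsplit : (∫ t in Set.Ioc (0:ℝ) u, Real.exp (-t^2)) + ∫ t in Set.Ioi u, Real.exp (-t^2)
      = ∫ t in Set.Ioi (0:ℝ), Real.exp (-t^2) := by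
    rw [← setIntegral_union (Set.Ioc_disjoint_Ioi le_rfl) measurableSet_Ioi
      ((integrableOn_gauss 0).mono_set Set.Ioc_subset_Ioi_self) (integrableOn_gauss u),
      Set.Ioc_union_Ioi_eq_Ioi hu]
  have hint : (∫ t in (0:ℝ)..u, Real.exp (-t^2)) = ∫ t in Set.Ioc (0:ℝ) u, Real.exp (-t^2) :=
    intervalIntegral.integral_of_le hu
  have hπ : Real.sqrt Real.pi ≠ 0 := by positivity
  rw [erfc, erf, hint]
  have : (∫ t in Set.Ioc (0:ℝ) u, Real.exp (-t^2))
      = Real.sqrt Real.pi / 2 - ∫ t in Set.Ioi u, Real.exp (-t^2) := by linarith [hsplit, hIoi0]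
  rw [this]
  field_simp
  ring

lemma integral_mul_gauss (u : ℝ) :
    ∫ t in Set.Ioi u, t * Real.exp (-t^2) = Real.exp (-u^2) / 2 := by
  have hderiv : ∀ x ∈ Set.Ici u,
      HasDerivAt (fun t : ℝ => -Real.exp (-t^2) / 2) (x * Real.exp (-x^2)) x := by
    intro x _
    have h1 : HasDerivAt (fun t : ℝ => -t^2) (-(2*x)) x := by
      simpa using ((hasDerivAt_pow 2 x)).fun_neg
    have h2 : HasDerivAt (fun t : ℝ => Real.exp (-t^2)) (Real.exp (-x^2) * -(2*x)) x := h1.exp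
    have h3 := (h2.fun_neg).div_const 2
    refine h3.congr_deriv ?_
    ring
  have htend : Tendsto (fun t : ℝ => -Real.exp (-t^2) / 2) atTop (nhds 0) := by
    have h1 : Tendsto (fun t : ℝ => -t^2) atTop atBot := by
      simpa using (tendsto_pow_atTop (n := 2) (by norm_num)).neg_const_mul (r := -1)
    have h2 : Tendsto (fun t : ℝ => Real.exp (-t^2)) atTop (nhds 0) :=
      Real.tendsto_exp_atBot.comp h1
    simpa using (h2.neg).div_const 2
  have := integral_Ioi_of_hasDerivAt_of_tendsto' hderiv (integrableOn_mul_gauss u) htend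
  rw [this]; ring

lemma integral_gauss_le {u : ℝ} (hu : 0 < u) :
    ∫ t in Set.Ioi u, Real.exp (-t^2) ≤ Real.exp (-u^2) / (2 * u) := by
  have h1 : ∫ t in Set.Ioi u, Real.exp (-t^2)
      ≤ ∫ t in Set.Ioi u, u⁻¹ * (t * Real.exp (-t^2)) := by
    refine setIntegral_mono_on (integrableOn_gauss u)
      (((integrableOn_mul_gauss u)).const_mul u⁻¹) measurableSet_Ioi ?_
    intro t ht
    have ht' : u ≤ t := (le_of_lt ht)
    have h2 : 1 ≤ u⁻¹ * t := by
      rw [inv_mul_eq_div, le_div_iff₀ hu]; linarith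
    calc Real.exp (-t^2) = 1 * Real.exp (-t^2) := by ring
      _ ≤ (u⁻¹ * t) * Real.exp (-t^2) :=
        mul_le_mul_of_nonneg_right h2 (Real.exp_pos _).le
      _ = u⁻¹ * (t * Real.exp (-t^2)) := by ring
  rw [integral_const_mul, integral_mul_gauss] at h1
  calc ∫ t in Set.Ioi u, Real.exp (-t^2) ≤ u⁻¹ * (Real.exp (-u^2) / 2) := h1
    _ = Real.exp (-u^2) / (2 * u) := by field_simp
  
lemma erfc_le {u : ℝ} (hu : 0 < u) :
    erfc u ≤ Real.exp (-u^2) / (Real.sqrt Real.pi * u) := by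
  rw [erfc_eq_integral hu.le]
  have hπ : 0 < Real.sqrt Real.pi := Real.sqrt_pos.mpr Real.pi_pos
  have := integral_gauss_le hu
  calc (2 / Real.sqrt Real.pi) * ∫ t in Set.Ioi u, Real.exp (-t^2)
      ≤ (2 / Real.sqrt Real.pi) * (Real.exp (-u^2) / (2*u)) := by
        apply mul_le_mul_of_nonneg_left this (by positivity)
    _ = Real.exp (-u^2) / (Real.sqrt Real.pi * u) := by field_simp

lemma log_seven_pos : 0 < Real.log 7 := Real.log_pos (by norm_num)

lemma hasDerivAt_f {x : ℝ} (hx : 1 ≤ x) :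
    HasDerivAt (fun x : ℝ => x * erfc (Real.sqrt (Real.log (7 * x))))
      (erfc (Real.sqrt (Real.log (7 * x)))
        - Real.exp (-(Real.log (7*x))) / (Real.sqrt Real.pi * Real.sqrt (Real.log (7*x)))) x := by
  have hx0 : 0 < x := by linarith
  set L := Real.log (7 * x) with hLdef
  have hL : 0 < L := by
    rw [hLdef]
    apply Real.log_pos; nlinarith
  have hL2 : Real.sqrt L ^ 2 = L := Real.sq_sqrt hL.le
  have hsL : 0 < Real.sqrt L := Real.sqrt_pos.mpr hL
  have h1 : HasDerivAt (fun x : ℝ => 7 * x) 7 x := by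
    simpa using (hasDerivAt_id x).const_mul 7
  have h2 : HasDerivAt (fun x : ℝ => Real.log (7 * x)) (7 / (7 * x)) x :=
    h1.log (by positivity)
  have h3 : HasDerivAt (fun x : ℝ => Real.sqrt (Real.log (7 * x)))
      (1 / (2 * Real.sqrt L) * (7 / (7 * x))) x :=
    (Real.hasDerivAt_sqrt hL.ne').comp x h2
  have h4 : HasDerivAt (fun x : ℝ => erf (Real.sqrt (Real.log (7 * x))))
      ((2 / Real.sqrt Real.pi * Real.exp (-(Real.sqrt L)^2))
        * (1 / (2 * Real.sqrt L) * (7 / (7 * x)))) x :=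
    by have := (hasDerivAt_erf (Real.sqrt L)).comp x h3; exact this
  have h5 : HasDerivAt (fun x : ℝ => erfc (Real.sqrt (Real.log (7 * x))))
      (-((2 / Real.sqrt Real.pi * Real.exp (-(Real.sqrt L)^2))
        * (1 / (2 * Real.sqrt L) * (7 / (7 * x))))) x := by
    simpa [erfc] using (hasDerivAt_const x (1:ℝ)).fun_sub h4
  have h6 := (hasDerivAt_id x).mul h5
  refine h6.congr_deriv ?_
  rw [hL2, ← hLdef]
  simp only [id]
  have hπ : 0 < Real.sqrt Real.pi := Real.sqrt_pos.mpr Real.pi_pos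
  field_simp
  ring

theorem K_erfc_antitone :
    AntitoneOn (fun x : ℝ => x * erfc (Real.sqrt (Real.log (7 * x)))) (Set.Ici 1)
    ∧ ∀ K : ℕ, 1 ≤ K →
        (K : ℝ) * erfc (Real.sqrt (Real.log (7 * K))) ≤ erfc (Real.sqrt (Real.log 7)) := by
  have hanti : AntitoneOn (fun x : ℝ => x * erfc (Real.sqrt (Real.log (7 * x)))) (Set.Ici 1) := by
    apply antitoneOn_of_deriv_nonpos (convex_Ici 1)
    · intro x hx
      exact (hasDerivAt_f hx).continuousAt.continuousWithinAt
    · intro x hx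
      rw [interior_Ici] at hx
      exact ((hasDerivAt_f (le_of_lt hx)).differentiableAt).differentiableWithinAt
    · intro x hx
      rw [interior_Ici] at hx
      have hx1 : (1:ℝ) ≤ x := le_of_lt hx
      rw [(hasDerivAt_f hx1).deriv]
      set L := Real.log (7 * x) with hLdef
      have hL : 0 < L := by
        rw [hLdef]; apply Real.log_pos; nlinarith
      have hsL : 0 < Real.sqrt L := Real.sqrt_pos.mpr hL
      have hL2 : Real.sqrt L ^ 2 = L := Real.sq_sqrt hL.le
      have := erfc_le hsL
      rw [hL2] at this
      linarith
  refine ⟨hanti, fun K hK => ?_⟩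
  have hK1 : (1:ℝ) ≤ (K:ℝ) := by exact_mod_cast hK
  have := hanti (Set.self_mem_Ici) (by exact hK1 : (K:ℝ) ∈ Set.Ici 1) hK1
  simpa using this
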